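/- Euler–Lagrange regularity: let L : [a,b] × ℝⁿ × ℝⁿ → ℝ be continuous with continuous partial derivatives ∂L/∂q and ∂L/∂q̇, and let γ = (q, q̇) be a C¹ curve such that ∫_a^b [∂L/∂q(t,q(t),q̇(t))·v(t) + ∂L/∂q̇(t,q(t),q̇(t))·v'(t)] dt = 0 for all C¹ maps v : [a,b] → ℝⁿ with support in (a,b). Then t ↦ ∂L/∂q̇(t,q(t),q̇(t)) is of class C¹ and satisfies (d/dt) ∂L/∂q̇(t,q(t),q̇(t)) = ∂L/∂q(t,q(t),q̇(t)) on [a,b]. -/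

import Mathlib

open MeasureTheory intervalIntegral Set

section
variable {a b : ℝ}

/-- The bump function used in the du Bois–Reymond argument. -/
noncomputable def dbrBump (hab : a < b) : ContDiffBump ((a + b) / 2) :=
  ⟨(b - a) / 4, (b - a) / 3, by linarith, by linarith⟩

lemma dbrBump_tsupport (hab : a < b) :
    tsupport ((dbrBump hab).normed volume) ⊆ Set.Ioo a b := by
  rw [(dbrBump hab).tsupport_normed_eq, Real.closedBall_eq_Icc]
  have h1 : (dbrBump hab).rOut = (b - a) / 3 := rfl
  rw [h1]
  rintro x ⟨h2, h3⟩
  exact ⟨by linarith, by linarith⟩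

lemma dbrBump_intervalIntegral (hab : a < b) :
    (∫ t in a..b, (dbrBump hab).normed volume t) = 1 := by
  rw [intervalIntegral.integral_of_le hab.le,
    setIntegral_eq_integral_of_forall_compl_eq_zero (fun x hx => ?_),
    (dbrBump hab).integral_normed]
  apply image_eq_zero_of_notMem_tsupport
  intro hmem
  exact hx (Ioo_subset_Ioc_self (dbrBump_tsupport hab hmem))
end

/-- The primitive of a continuous function vanishing outside a compact subset of `(a,b)`
with zero total integral is a `C¹` test function supported in `(a,b)`. -/
lemma primitive_test {a b : ℝ} (hab : a < b) (g : ℝ → ℝ) (hg : Continuous g)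
    (K : Set ℝ) (hK : IsCompact K) (hKsub : K ⊆ Set.Ioo a b) (hKne : K.Nonempty)
    (hgz : ∀ s, s ∉ K → g s = 0) (htot : (∫ s in a..b, g s) = 0) :
    ContDiff ℝ 1 (fun t => ∫ s in a..t, g s) ∧
      tsupport (fun t => ∫ s in a..t, g s) ⊆ Set.Ioo a b := by
  set ψ : ℝ → ℝ := fun t => ∫ s in a..t, g s with hψ
  have hd : ∀ t, HasDerivAt ψ (g t) t := fun t => (hg.integral_hasStrictDerivAt a t).hasDerivAt
  have hC1 : ContDiff ℝ 1 ψ := by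
    rw [contDiff_one_iff_deriv]
    refine ⟨fun t => (hd t).differentiableAt, ?_⟩
    have : deriv ψ = g := funext fun t => (hd t).deriv
    rw [this]; exact hg
  set A := sInf K with hA
  set B := sSup K with hB
  have hAK : A ∈ K := hK.sInf_mem hKne
  have hBK : B ∈ K := hK.sSup_mem hKne
  have haA : a < A := (hKsub hAK).1
  have hBb : B < b := (hKsub hBK).2
  have low : ∀ t, t ≤ (a + A) / 2 → ψ t = 0 := by
    intro t ht
    have : Set.EqOn g 0 (Set.uIcc a t) := by
      intro s hs
      have hs1 : s ≤ max a t := (Set.mem_uIcc.mp hs).elim (fun h => h.2.trans (le_max_right a t))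
        (fun h => h.2.trans (le_max_left a t))
      have hs2 : s < A := lt_of_le_of_lt hs1 (by
        rcases max_cases a t with ⟨h1, _⟩ | ⟨h1, _⟩ <;> rw [h1] <;> linarith)
      have : s ∉ K := fun hsK => absurd (csInf_le hK.bddBelow hsK) (by rw [← hA]; linarith)
      exact hgz s this
    rw [hψ]
    simp only
    rw [intervalIntegral.integral_congr this]; simp
  have high : ∀ t, (B + b) / 2 ≤ t → ψ t = 0 := by
    intro t ht
    have key : (∫ s in a..b, g s) + (∫ s in b..t, g s) = ψ t :=
      intervalIntegral.integral_add_adjacent_intervals (hg.intervalIntegrable a b)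
        (hg.intervalIntegrable b t)
    have hz : (∫ s in b..t, g s) = 0 := by
      have : Set.EqOn g 0 (Set.uIcc b t) := by
        intro s hs
        have hs1 : min b t ≤ s := (Set.mem_uIcc.mp hs).elim (fun h => (min_le_left b t).trans h.1)
          (fun h => (min_le_right b t).trans h.1)
        have hs2 : B < s := lt_of_lt_of_le (by
          rcases min_cases b t with ⟨h1, _⟩ | ⟨h1, _⟩ <;> rw [h1] <;> linarith) hs1
        have : s ∉ K := fun hsK => absurd (le_csSup hK.bddAbove hsK) (by rw [← hB]; linarith)
        exact hgz s this
      rw [intervalIntegral.integral_congr this]; simp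
    rw [← key, hz, htot, add_zero]
  refine ⟨hC1, ?_⟩
  have hsup : Function.support ψ ⊆ Set.Icc ((a + A) / 2) ((B + b) / 2) := by
    intro t ht
    by_contra hmem
    rw [Set.mem_Icc] at hmem
    push_neg at hmem
    rcases le_or_gt ((a + A) / 2) t with h1 | h1
    · exact ht (high t (hmem h1).le)
    · exact ht (low t h1.le)
  have : tsupport ψ ⊆ Set.Icc ((a + A) / 2) ((B + b) / 2) :=
    closure_minimal hsup isClosed_Icc
  refine this.trans ?_
  rintro x ⟨h1, h2⟩
  exact ⟨by linarith, by linarith⟩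

/-- du Bois–Reymond lemma: a continuous function orthogonal to derivatives of `C¹`
test functions supported in `(a,b)` is constant on `[a,b]`. -/
lemma dbr {a b : ℝ} (hab : a < b) (k : ℝ → ℝ) (hk : Continuous k)
    (h : ∀ ψ : ℝ → ℝ, ContDiff ℝ 1 ψ → tsupport ψ ⊆ Set.Ioo a b →
      (∫ t in a..b, k t * deriv ψ t) = 0) :
    ∀ t ∈ Set.Icc a b, k t = k a := by
  set η := (dbrBump hab).normed volume with hηdef
  have hηc : Continuous η := (dbrBump hab).continuous_normed
  have hηsupp := dbrBump_tsupport hab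
  have hηint := dbrBump_intervalIntegral hab
  have hηK : HasCompactSupport η := (dbrBump hab).hasCompactSupport_normed
  set c' : ℝ := ∫ t in a..b, k t * η t with hc'
  have key : ∀ g : ℝ → ℝ, Continuous g → HasCompactSupport g → tsupport g ⊆ Set.Ioo a b →
      (∫ t in a..b, k t * g t) = (∫ t in a..b, g t) * c' := by
    intro g hgc hgK hgsupp
    set c : ℝ := ∫ t in a..b, g t with hcdef
    set w : ℝ → ℝ := fun s => g s - c * η s with hw
    have hwc : Continuous w := hgc.sub (continuous_const.mul hηc)
    have hKcomp : IsCompact (tsupport g ∪ tsupport η) := hgK.union hηK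
    have hKsub : tsupport g ∪ tsupport η ⊆ Set.Ioo a b := Set.union_subset hgsupp hηsupp
    have hKne : (tsupport g ∪ tsupport η).Nonempty := by
      refine ⟨(a + b) / 2, Or.inr ?_⟩
      rw [hηdef, (dbrBump hab).tsupport_normed_eq]
      exact Metric.mem_closedBall_self (by
        have : (dbrBump hab).rOut = (b - a) / 3 := rfl
        rw [this]; linarith)
    have hwz : ∀ s, s ∉ tsupport g ∪ tsupport η → w s = 0 := by
      intro s hs
      rw [Set.mem_union] at hs
      push_neg at hs
      rw [hw]
      simp only
      rw [image_eq_zero_of_notMem_tsupport hs.1, image_eq_zero_of_notMem_tsupport hs.2]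
      ring
    have htot : (∫ s in a..b, w s) = 0 := by
      rw [hw]
      simp only
      rw [intervalIntegral.integral_sub (f := g) (g := fun s => c * η s) (hgc.intervalIntegrable a b)
        ((continuous_const.mul hηc).intervalIntegrable a b),
        intervalIntegral.integral_const_mul, hηint, ← hcdef]
      ring
    obtain ⟨hψC, hψsupp⟩ := primitive_test hab w hwc _ hKcomp hKsub hKne hwz htot
    have hmain := h _ hψC hψsupp
    have hder : deriv (fun t => ∫ s in a..t, w s) = w :=
      funext fun t => ((hwc.integral_hasStrictDerivAt a t).hasDerivAt).deriv
    rw [hder] at hmain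
    have expand : (fun t => k t * w t) = fun t => k t * g t - c * (k t * η t) := by
      funext t; rw [hw]; ring
    rw [expand, intervalIntegral.integral_sub (f := fun t => k t * g t) (g := fun t => c * (k t * η t)) ((hk.mul hgc).intervalIntegrable a b)
      ((continuous_const.mul (hk.mul hηc)).intervalIntegrable a b),
      intervalIntegral.integral_const_mul, ← hc', sub_eq_zero] at hmain
    rw [hmain]
  have hae : ∀ᵐ x, x ∈ Set.Ioo a b → k x - c' = 0 := by
    apply IsOpen.ae_eq_zero_of_integral_contDiff_smul_eq_zero isOpen_Ioo
      (((hk.sub continuous_const).locallyIntegrable).locallyIntegrableOn _)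
    intro g hgC hgK hgsupp
    have h1 : (∫ x in Set.Ioc a b, g x • (k x - c')) = ∫ x, g x • (k x - c') := by
      apply setIntegral_eq_integral_of_forall_compl_eq_zero
      intro x hx
      have : g x = 0 := image_eq_zero_of_notMem_tsupport
        (fun hmem => hx (Set.Ioo_subset_Ioc_self (hgsupp hmem)))
      rw [this, zero_smul]
    show (∫ x, g x • (k x - c')) = 0
    rw [← h1, ← intervalIntegral.integral_of_le hab.le]
    have h2 : (fun x => g x • (k x - c')) = fun x => k x * g x - c' * g x := by
      funext x; simp [smul_eq_mul]; ring
    rw [h2, intervalIntegral.integral_sub (f := fun x => k x * g x) (g := fun x => c' * g x) ((hk.mul hgC.continuous).intervalIntegrable a b)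
      ((continuous_const.mul hgC.continuous).intervalIntegrable a b),
      intervalIntegral.integral_const_mul,
      key g hgC.continuous hgK hgsupp]
    ring
  have heq : Set.EqOn k (fun _ => c') (Set.Ioo a b) := by
    apply MeasureTheory.Measure.eqOn_Ioo_of_ae_eq (μ := volume)
    · have h3 : ∀ᵐ x ∂(volume.restrict (Set.Ioo a b)), k x = c' :=
        (MeasureTheory.ae_restrict_iff' measurableSet_Ioo).mpr (by
          filter_upwards [hae] with x hx hx'
          have := hx hx'
          linarith)
      exact h3
    · exact hk.continuousOn
    · exact continuous_const.continuousOn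
  have heq2 : Set.EqOn k (fun _ => c') (Set.Icc a b) := by
    rw [← closure_Ioo hab.ne]
    exact heq.closure hk continuous_const
  intro t ht
  rw [heq2 ht, heq2 (Set.left_mem_Icc.mpr hab.le)]

/-- Euler–Lagrange regularity: let `L(t,q,q̇)` be continuous with
continuous partial derivatives `∂L/∂q` and `∂L/∂q̇`, and let `q` be a `C¹` curve
satisfying the weak Euler–Lagrange equation against all `C¹` test fields `v` with
support in `(a,b)`. Then `t ↦ ∂L/∂q̇(t,q(t),q̇(t))` is of class `C¹` on `[a,b]` and
`(d/dt) ∂L/∂q̇(t,q(t),q̇(t)) = ∂L/∂q(t,q(t),q̇(t))` there. -/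
theorem euler_lagrange_regularity
    (n : ℕ) (a b : ℝ) (hab : a < b)
    (L : ℝ × (Fin n → ℝ) × (Fin n → ℝ) → ℝ) (hL : Continuous L)
    (Lq Lv : ℝ × (Fin n → ℝ) × (Fin n → ℝ) → ((Fin n → ℝ) →L[ℝ] ℝ))
    (hLq : Continuous Lq) (hLv : Continuous Lv)
    (hdq : ∀ (t : ℝ) (q v : Fin n → ℝ),
      HasFDerivAt (fun q' => L (t, q', v)) (Lq (t, q, v)) q)
    (hdv : ∀ (t : ℝ) (q v : Fin n → ℝ),
      HasFDerivAt (fun v' => L (t, q, v')) (Lv (t, q, v)) v)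
    (q : ℝ → (Fin n → ℝ)) (hq : ContDiff ℝ 1 q)
    (hweak : ∀ v : ℝ → (Fin n → ℝ), ContDiff ℝ 1 v → tsupport v ⊆ Set.Ioo a b →
      (∫ t in a..b, (Lq (t, q t, deriv q t)) (v t)
        + (Lv (t, q t, deriv q t)) (deriv v t)) = 0) :
    ContDiffOn ℝ 1 (fun s => Lv (s, q s, deriv q s)) (Set.Icc a b) ∧
      ∀ t ∈ Set.Icc a b,
        HasDerivWithinAt (fun s => Lv (s, q s, deriv q s))
          (Lq (t, q t, deriv q t)) (Set.Icc a b) t := by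
  have hqc : Continuous q := hq.continuous
  have hq'c : Continuous (deriv q) := hq.continuous_deriv le_rfl
  have hγ : Continuous (fun t : ℝ => (t, q t, deriv q t)) :=
    continuous_id.prodMk (hqc.prodMk hq'c)
  set F : ℝ → ((Fin n → ℝ) →L[ℝ] ℝ) := fun t => Lv (t, q t, deriv q t) with hF
  set G : ℝ → ((Fin n → ℝ) →L[ℝ] ℝ) := fun t => Lq (t, q t, deriv q t) with hG
  have hFc : Continuous F := hLv.comp hγ
  have hGc : Continuous G := hLq.comp hγ
  set H : ℝ → ((Fin n → ℝ) →L[ℝ] ℝ) := fun t => ∫ s in a..t, G s with hH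
  have hHd : ∀ t, HasDerivAt H (G t) t :=
    fun t => (hGc.integral_hasStrictDerivAt a t).hasDerivAt
  have hHc : Continuous H := by
    rw [continuous_iff_continuousAt]
    exact fun t => (hHd t).continuousAt
  -- integration by parts gives: for test v, ∫ (F - H)(v') = 0
  have hFH : ∀ v : ℝ → (Fin n → ℝ), ContDiff ℝ 1 v → tsupport v ⊆ Set.Ioo a b →
      (∫ t in a..b, (F t - H t) (deriv v t)) = 0 := by
    intro v hv hvsupp
    have hvc : Continuous v := hv.continuous
    have hv'c : Continuous (deriv v) := hv.continuous_deriv le_rfl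
    have hvd : ∀ t, HasDerivAt v (deriv v t) t :=
      fun t => (hv.differentiable one_ne_zero t).hasDerivAt
    have hPd : ∀ t, HasDerivAt (fun s => (H s) (v s))
        ((G t) (v t) + (H t) (deriv v t)) t :=
      fun t => (hHd t).clm_apply (hvd t)
    have hint : Continuous (fun t => (G t) (v t) + (H t) (deriv v t)) :=
      (hGc.clm_apply hvc).add (hHc.clm_apply hv'c)
    have hva : v a = 0 := image_eq_zero_of_notMem_tsupport
      (fun hm => absurd (hvsupp hm) (by simp))
    have hvb : v b = 0 := image_eq_zero_of_notMem_tsupport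
      (fun hm => absurd (hvsupp hm) (by simp))
    have parts : (∫ t in a..b, (G t) (v t) + (H t) (deriv v t)) = 0 := by
      rw [intervalIntegral.integral_eq_sub_of_hasDerivAt (fun t _ => hPd t)
        (hint.intervalIntegrable a b), hva, hvb]
      simp
    have e1 := hweak v hv hvsupp
    have expand : (fun t => (F t - H t) (deriv v t))
        = fun t => ((G t) (v t) + (F t) (deriv v t)) - ((G t) (v t) + (H t) (deriv v t)) := by
      funext t
      simp [ContinuousLinearMap.sub_apply]
    rw [expand, intervalIntegral.integral_sub (f := fun t => (G t) (v t) + (F t) (deriv v t))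
      (((hGc.clm_apply hvc).add (hFc.clm_apply hv'c)).intervalIntegrable a b)
      (hint.intervalIntegrable a b), e1, parts, sub_zero]
  -- reduce to scalar du Bois–Reymond for each direction w
  have hconst : ∀ (w : Fin n → ℝ), ∀ t ∈ Set.Icc a b,
      (F t - H t) w = (F a - H a) w := by
    intro w
    have hkc : Continuous (fun t => (F t - H t) w) :=
      ((hFc.sub hHc).clm_apply continuous_const)
    apply dbr hab _ hkc
    intro ψ hψ hψsupp
    have := hFH (fun t => ψ t • w) (hψ.smul contDiff_const)
      ((closure_mono (Function.support_smul_subset_left ψ (fun _ => w))).trans hψsupp)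
    have hder : ∀ t, deriv (fun s => ψ s • w) t = deriv ψ t • w :=
      fun t => ((hψ.differentiable one_ne_zero t).hasDerivAt.smul_const w).deriv
    have heq : (fun t => (F t - H t) (deriv (fun s => ψ s • w) t))
        = fun t => (F t - H t) w * deriv ψ t := by
      funext t
      rw [hder t, (F t - H t).map_smul, smul_eq_mul, mul_comm]
    rw [heq] at this
    exact this
  have hFt : ∀ t ∈ Set.Icc a b, F t = H t + (F a - H a) := by
    intro t ht
    ext w
    have := hconst w t ht
    simp only [ContinuousLinearMap.sub_apply, ContinuousLinearMap.add_apply] at this ⊢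
    linarith
  have hHC1 : ContDiff ℝ 1 H := by
    rw [contDiff_one_iff_deriv]
    refine ⟨fun t => (hHd t).differentiableAt, ?_⟩
    have : deriv H = G := funext fun t => (hHd t).deriv
    rw [this]; exact hGc
  constructor
  · exact ((hHC1.add contDiff_const).contDiffOn).congr hFt
  · intro t ht
    exact ((hHd t).add_const (F a - H a)).hasDerivWithinAt.congr hFt (hFt t ht)
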